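/- Define T_n(z) = 2 ∑_{i=1}^{⌊(n-1)/2⌋} S_{n-i-2}(z) S_{i-1}(z) z^{n-i-1} + (S_{⌊(n-2)/2⌋}(z))², where S_m(z) = ∏_{i=1}^m (1+z^i). Then for each n ≥ 2, the polynomial D_n(z) = ∏_{j≥1} S_{⌊(n-2)/2^j⌋}(z) divides T_n(z) in ℤ[z]. -/

import Mathlib

open Polynomial

noncomputable def S (n : ℕ) : Polynomial ℤ := ∏ i ∈ Finset.Icc 1 n, (1 + X ^ i)

noncomputable def D (n : ℕ) : Polynomial ℤ := ∏ᶠ j : ℕ, S ((n - 2) / 2 ^ (j + 1))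

noncomputable def T (n : ℕ) : Polynomial ℤ :=
  2 * ∑ i ∈ Finset.Icc 1 ((n - 1) / 2), S (n - i - 2) * S (i - 1) * X ^ (n - i - 1)
    + (S ((n - 2) / 2)) ^ 2

open Finset

/-- `1 + X^i` as a product of cyclotomic polynomials. -/
lemma one_add_X_pow_eq (i : ℕ) (hi : 0 < i) :
    (1 : Polynomial ℤ) + X ^ i
      = ∏ c ∈ i.divisors.filter (fun c => ¬ 2 * c ∣ i), cyclotomic (2 * c) ℤ := by
  have h2i : 0 < 2 * i := by omega
  have hsub : i.divisors ⊆ (2 * i).divisors := by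
    intro d hd
    rw [Nat.mem_divisors] at hd ⊢
    exact ⟨hd.1.mul_left 2, by omega⟩
  have hsplit : (∏ d ∈ (2 * i).divisors \ i.divisors, cyclotomic d ℤ)
      * ∏ d ∈ i.divisors, cyclotomic d ℤ = ∏ d ∈ (2 * i).divisors, cyclotomic d ℤ :=
    Finset.prod_sdiff hsub
  rw [prod_cyclotomic_eq_X_pow_sub_one hi, prod_cyclotomic_eq_X_pow_sub_one h2i] at hsplit
  have hX : (X ^ i - 1 : Polynomial ℤ) ≠ 0 := by
    intro h
    have := congrArg (eval 0) h
    simp [zero_pow hi.ne'] at this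
  have hmul : (X ^ i - 1) * ((1 : Polynomial ℤ) + X ^ i)
      = (X ^ i - 1) * ∏ d ∈ (2 * i).divisors \ i.divisors, cyclotomic d ℤ := by
    rw [mul_comm (X ^ i - 1) (∏ d ∈ _ \ _, cyclotomic d ℤ), hsplit, two_mul, pow_add]
    ring
  have hprod : (1 : Polynomial ℤ) + X ^ i
      = ∏ d ∈ (2 * i).divisors \ i.divisors, cyclotomic d ℤ :=
    mul_left_cancel₀ hX hmul
  rw [hprod]
  have himg : (2 * i).divisors \ i.divisors
      = (i.divisors.filter (fun c => ¬ 2 * c ∣ i)).image (fun c => 2 * c) := by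
    ext d
    simp only [Finset.mem_sdiff, Nat.mem_divisors, Finset.mem_image, Finset.mem_filter]
    constructor
    · rintro ⟨⟨hd2i, -⟩, hdni⟩
      have hd_ne_i : ¬ d ∣ i := fun h => hdni ⟨h, hi.ne'⟩
      have hdeven : 2 ∣ d := by
        by_contra hodd
        have hcop : Nat.Coprime d 2 := by
          rcases Nat.even_or_odd d with he | ho
          · exact absurd he.two_dvd hodd
          · exact ho.coprime_two_right
        have : d ∣ i * 2 := by rwa [mul_comm] at hd2i
        exact hd_ne_i (hcop.dvd_of_dvd_mul_right this)
      obtain ⟨c, rfl⟩ := hdeven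
      have hci : c ∣ i := (Nat.mul_dvd_mul_iff_left (show 0 < 2 by norm_num)).mp hd2i
      refine ⟨c, ⟨⟨hci, hi.ne'⟩, fun h => hd_ne_i ?_⟩, rfl⟩
      exact h
    · rintro ⟨c, ⟨⟨hci, -⟩, hnc⟩, rfl⟩
      exact ⟨⟨mul_dvd_mul_left 2 hci, by omega⟩, fun h => hnc h.1⟩
  rw [himg, Finset.prod_image]
  intro a _ b _ h
  simp only at h
  omega

/-- Counting the `i ∈ [1, a]` divisible by `c` but not by `2c`. -/
lemma card_count (a c : ℕ) :
    ((Icc 1 a).filter (fun i => c ∣ i ∧ ¬ 2 * c ∣ i)).card = a / c - a / (2 * c) := by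
  have hIcc : Icc 1 a = Ioc 0 a := by ext i; simp; omega
  have hsplit : (Icc 1 a).filter (fun i => c ∣ i ∧ ¬ 2 * c ∣ i)
      = ((Ioc 0 a).filter (fun i => c ∣ i)) \ ((Ioc 0 a).filter (fun i => 2 * c ∣ i)) := by
    rw [hIcc]; ext i
    simp only [Finset.mem_filter, Finset.mem_sdiff]
    tauto
  have hsub : ((Ioc 0 a).filter (fun i => 2 * c ∣ i)) ⊆ ((Ioc 0 a).filter (fun i => c ∣ i)) := by
    intro i hi
    simp only [Finset.mem_filter] at hi ⊢
    exact ⟨hi.1, dvd_trans (dvd_mul_left c 2) hi.2⟩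
  rw [hsplit, Finset.card_sdiff_of_subset hsub, Nat.Ioc_filter_dvd_card_eq_div,
    Nat.Ioc_filter_dvd_card_eq_div]

/-- The cyclotomic factorization of `S a`. -/
lemma S_eq (a : ℕ) :
    S a = ∏ c ∈ Icc 1 a, cyclotomic (2 * c) ℤ ^ (a / c - a / (2 * c)) := by
  unfold S
  have h1 : ∏ i ∈ Icc 1 a, ((1 : Polynomial ℤ) + X ^ i)
      = ∏ i ∈ Icc 1 a, ∏ c ∈ i.divisors.filter (fun c => ¬ 2 * c ∣ i), cyclotomic (2 * c) ℤ := by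
    apply Finset.prod_congr rfl
    intro i hi
    rw [Finset.mem_Icc] at hi
    exact one_add_X_pow_eq i (by omega)
  rw [h1]
  rw [Finset.prod_comm' (t' := Icc 1 a)
    (s' := fun c => (Icc 1 a).filter (fun i => c ∣ i ∧ ¬ 2 * c ∣ i))
    (f := fun i c => cyclotomic (2 * c) ℤ)]
  · apply Finset.prod_congr rfl
    intro c _
    rw [Finset.prod_const, card_count]
  · intro i c
    simp only [Finset.mem_Icc, Finset.mem_filter, Nat.mem_divisors]
    constructor
    · rintro ⟨⟨h1i, h2i⟩, ⟨⟨hci, -⟩, hnc⟩⟩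
      have hc1 : 1 ≤ c := Nat.pos_of_dvd_of_pos hci (by omega)
      have hca : c ≤ a := le_trans (Nat.le_of_dvd (by omega) hci) h2i
      exact ⟨⟨⟨h1i, h2i⟩, hci, hnc⟩, hc1, hca⟩
    · rintro ⟨⟨⟨h1i, h2i⟩, hci, hnc⟩, -, -⟩
      exact ⟨⟨h1i, h2i⟩, ⟨hci, by omega⟩, hnc⟩

lemma tele (g : ℕ → ℕ) (hg : ∀ j, g (j + 1) ≤ g j) (J : ℕ) :
    ∑ j ∈ range J, (g j - g (j + 1)) = g 0 - g J := by
  induction J with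
  | zero => simp
  | succ J ih =>
    have hmono : g J ≤ g 0 := by
      clear ih
      induction J with
      | zero => exact le_rfl
      | succ K ih2 => exact le_trans (hg K) ih2
    rw [Finset.sum_range_succ, ih]
    have h1 := hg J
    omega

/-- The cyclotomic factorization of `D n`. -/
lemma D_eq (n : ℕ) :
    D n = ∏ c ∈ Icc 1 (n - 2), cyclotomic (2 * c) ℤ ^ ((n - 2) / (2 * c)) := by
  set m := n - 2 with hm
  have hS0 : S 0 = 1 := by simp [S]
  have hfin : D n = ∏ j ∈ range m, S (m / 2 ^ (j + 1)) := by
    unfold D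
    rw [← hm]
    apply finprod_eq_prod_of_mulSupport_subset
    intro j hj
    simp only [Function.mem_mulSupport] at hj
    simp only [Finset.coe_range, Set.mem_Iio]
    by_contra hjm
    push_neg at hjm
    have h0 : m / 2 ^ (j + 1) = 0 := by
      apply Nat.div_eq_of_lt
      calc m ≤ j := hjm
        _ < 2 ^ j := Nat.lt_two_pow_self
        _ ≤ 2 ^ (j + 1) := Nat.pow_le_pow_right (by norm_num) (by omega)
    rw [h0, hS0] at hj
    exact hj rfl
  rw [hfin]
  have hstep : ∀ j ∈ range m, S (m / 2 ^ (j + 1))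
      = ∏ c ∈ Icc 1 m, cyclotomic (2 * c) ℤ
          ^ ((m / 2 ^ (j + 1)) / c - (m / 2 ^ (j + 1)) / (2 * c)) := by
    intro j _
    rw [S_eq]
    apply Finset.prod_subset
    · apply Finset.Icc_subset_Icc_right
      exact Nat.div_le_self _ _
    · intro c _ hc
      simp only [Finset.mem_Icc, not_and, not_le] at hc
      rcases le_or_gt 1 c with h1 | h1
      · have : m / 2 ^ (j + 1) < c := hc h1
        have hza : m / 2 ^ (j + 1) / c = 0 := Nat.div_eq_of_lt this
        have hzb : m / 2 ^ (j + 1) / (2 * c) = 0 := Nat.div_eq_of_lt (by omega)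
        rw [hza, hzb]
        simp
      · interval_cases c
        simp [Nat.div_zero]
  rw [Finset.prod_congr rfl hstep, Finset.prod_comm]
  apply Finset.prod_congr rfl
  intro c hc
  rw [Finset.mem_Icc] at hc
  rw [Finset.prod_pow_eq_pow_sum]
  congr 1
  have hdiv1 : ∀ j, m / 2 ^ (j + 1) / c = m / (2 ^ (j + 1) * c) := by
    intro j; rw [Nat.div_div_eq_div_mul]
  have hdiv2 : ∀ j, m / 2 ^ (j + 1) / (2 * c) = m / (2 ^ (j + 2) * c) := by
    intro j
    rw [Nat.div_div_eq_div_mul]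
    congr 1
    ring
  have hsum : ∑ j ∈ range m, (m / 2 ^ (j + 1) / c - m / 2 ^ (j + 1) / (2 * c))
      = ∑ j ∈ range m, ((fun j => m / (2 ^ (j + 1) * c)) j
          - (fun j => m / (2 ^ (j + 1) * c)) (j + 1)) := by
    apply Finset.sum_congr rfl
    intro j _
    rw [hdiv1, hdiv2]
  rw [hsum, tele]
  · have hg0 : m / (2 ^ (0 + 1) * c) = m / (2 * c) := by norm_num
    have hgm : m / (2 ^ (m + 1) * c) = 0 := by
      apply Nat.div_eq_of_lt
      calc m < 2 ^ m := Nat.lt_two_pow_self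
        _ ≤ 2 ^ (m + 1) := Nat.pow_le_pow_right (by norm_num) (by omega)
        _ ≤ 2 ^ (m + 1) * c := Nat.le_mul_of_pos_right _ (by omega)
    rw [hg0, hgm, Nat.sub_zero]
  · intro j
    apply Nat.div_le_div_left
    · exact Nat.mul_le_mul_right _ (Nat.pow_le_pow_right (by norm_num) (by omega))
    · exact Nat.mul_pos (Nat.pow_pos (by norm_num)) (by omega)

/-- The key arithmetic inequality. -/
lemma keyineq (c a b m : ℕ) (hc : 0 < c) (hm : m ≤ a + b + 1) :
    m / (2 * c) ≤ (a / c - a / (2 * c)) + (b / c - b / (2 * c)) := by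
  have e1 : a / (2 * c) = a / c / 2 := by rw [Nat.div_div_eq_div_mul, mul_comm]
  have e2 : b / (2 * c) = b / c / 2 := by rw [Nat.div_div_eq_div_mul, mul_comm]
  have e3 : m / (2 * c) = m / c / 2 := by rw [Nat.div_div_eq_div_mul, mul_comm]
  have h2 : m / c ≤ a / c + b / c + 1 := by
    rw [Nat.div_le_iff_le_mul_add_pred hc]
    have ha := Nat.div_add_mod a c
    have hb := Nat.div_add_mod b c
    have hma : a % c < c := Nat.mod_lt _ hc
    have hmb : b % c < c := Nat.mod_lt _ hc
    have hexp : c * (a / c + b / c + 1) = c * (a / c) + c * (b / c) + c := by ring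
    omega
  rw [e1, e2, e3]
  generalize a / c = x at h2 ⊢
  generalize b / c = y at h2 ⊢
  generalize m / c = z at h2 ⊢
  omega

/-- Prime power divisibility into `S a`. -/
lemma phi_pow_dvd_S (a c : ℕ) (hc : 0 < c) :
    cyclotomic (2 * c) ℤ ^ (a / c - a / (2 * c)) ∣ S a := by
  rcases le_or_gt c a with h | h
  · rw [S_eq]
    exact Finset.dvd_prod_of_mem _ (Finset.mem_Icc.mpr ⟨hc, h⟩)
  · have : a / c = 0 := Nat.div_eq_of_lt h
    rw [this, Nat.zero_sub, pow_zero]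
    exact one_dvd _

lemma phi_pow_dvd_T (n c : ℕ) (hn : 2 ≤ n) (hc : 0 < c) :
    cyclotomic (2 * c) ℤ ^ ((n - 2) / (2 * c)) ∣ T n := by
  set m := n - 2 with hm
  set Φ := cyclotomic (2 * c) ℤ with hΦ
  unfold T
  apply dvd_add
  · apply Dvd.dvd.mul_left
    apply Finset.dvd_sum
    intro i hi
    rw [Finset.mem_Icc] at hi
    set a := n - i - 2 with ha
    set b := i - 1 with hb
    have hab : m ≤ a + b + 1 := by omega
    have hdvd : Φ ^ ((a / c - a / (2 * c)) + (b / c - b / (2 * c))) ∣ S a * S b := by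
      rw [pow_add]
      exact mul_dvd_mul (phi_pow_dvd_S a c hc) (phi_pow_dvd_S b c hc)
    apply Dvd.dvd.mul_right
    exact dvd_trans (pow_dvd_pow Φ (keyineq c a b m hc hab)) hdvd
  · set h := m / 2 with hh
    have hab : m ≤ h + h + 1 := by omega
    have hdvd : Φ ^ ((h / c - h / (2 * c)) + (h / c - h / (2 * c))) ∣ S h ^ 2 := by
      rw [pow_add, sq]
      exact mul_dvd_mul (phi_pow_dvd_S h c hc) (phi_pow_dvd_S h c hc)
    exact dvd_trans (pow_dvd_pow Φ (keyineq c h h m hc hab)) hdvd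

theorem D_dvd_T (n : ℕ) (hn : 2 ≤ n) : D n ∣ T n := by
  have hmonic : (D n).Monic := by
    rw [D_eq]
    exact monic_prod_of_monic _ _ fun c _ => (cyclotomic.monic _ ℤ).pow _
  rw [← Polynomial.map_dvd_map (Int.castRingHom ℚ) Int.cast_injective hmonic]
  rw [D_eq, Polynomial.map_prod]
  simp only [Polynomial.map_pow, map_cyclotomic]
  apply Finset.prod_dvd_of_coprime
  · intro c hc c' hc' hne
    simp only [Function.onFun]
    apply IsCoprime.pow
    exact cyclotomic.isCoprime_rat (by simp only [Finset.mem_coe, Finset.mem_Icc] at hc hc'; omega)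
  · intro c hc
    rw [Finset.mem_Icc] at hc
    have hz := phi_pow_dvd_T n c hn hc.1
    have := map_dvd (Polynomial.mapRingHom (Int.castRingHom ℚ)) hz
    simpa only [Polynomial.coe_mapRingHom, Polynomial.map_pow, map_cyclotomic] using this
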